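/- Let P ≥ 1 be an integer, X = {1, 2, …, P+2}, and define g on subsets of X by g(A) = |A| − 1 if both 1 ∈ A and P+2 ∈ A, and g(A) = |A| otherwise. Let 𝓕 be the family of all A ⊆ X such that for every j ∈ {2, …, P+2}, not both 1 ∈ A and j ∈ A (equivalently, if 1 ∈ A then A = {1} or A = ∅ ∪ {1}). Then the maximum of g over 𝓕 equals P+1, attained by the set {2, 3, …, P+2}; moreover {1} ∈ 𝓕 is a maximal member of 𝓕 (no proper superset in 𝓕) with g({1}) = 1, so that (max_{A ∈ 𝓕} g(A) − g({1})) / (max_{A ∈ 𝓕} g(A) − g(∅)) = P/(P+1). -/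

import Mathlib

/-- Tightness of the `P/(P+1)` bound: over the family `F` of subsets of
`X = {1, …, P+2}` containing at most one of `1` and any `j ∈ {2, …, P+2}`,
the maximum of `g` is `P+1`, attained at `{2, …, P+2}`; the set `{1}` is a
maximal member of `F` with `g {1} = 1`, so the gap ratio equals `P/(P+1)`. -/
theorem tightness_example
    (P : ℕ) (hP : 1 ≤ P)
    (X : Finset ℕ) (hX : X = Finset.Icc 1 (P + 2))
    (g : Finset ℕ → ℝ)
    (hg : ∀ A : Finset ℕ,
      g A = if 1 ∈ A ∧ P + 2 ∈ A then (A.card : ℝ) - 1 else (A.card : ℝ))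
    (F : Finset ℕ → Prop)
    (hF : ∀ A : Finset ℕ,
      F A ↔ A ⊆ X ∧ ∀ j, 2 ≤ j → j ≤ P + 2 → ¬(1 ∈ A ∧ j ∈ A)) :
    F (Finset.Icc 2 (P + 2)) ∧
    g (Finset.Icc 2 (P + 2)) = (P : ℝ) + 1 ∧
    (∀ A, F A → g A ≤ (P : ℝ) + 1) ∧
    F {1} ∧
    (∀ B, F B → ({1} : Finset ℕ) ⊆ B → B = {1}) ∧
    g {1} = 1 ∧
    (((P : ℝ) + 1) - g {1}) / (((P : ℝ) + 1) - g ∅) = (P : ℝ) / ((P : ℝ) + 1) := by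
  have h1 : F (Finset.Icc 2 (P + 2)) := by
    rw [hF]
    constructor
    · rw [hX]
      apply Finset.Icc_subset_Icc <;> omega
    · intro j _ _ ⟨h1, _⟩
      simp [Finset.mem_Icc] at h1
  have h2 : g (Finset.Icc 2 (P + 2)) = (P : ℝ) + 1 := by
    rw [hg]
    have : (1 : ℕ) ∉ Finset.Icc 2 (P + 2) := by simp
    rw [if_neg (fun h => this h.1)]
    rw [Nat.card_Icc]
    push_cast
    ring_nf
  have hg1 : g {1} = 1 := by
    rw [hg]
    have : P + 2 ∉ ({1} : Finset ℕ) := by simp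
    rw [if_neg (fun h => this h.2)]
    simp
  refine ⟨h1, h2, ?_, ?_, ?_, hg1, ?_⟩
  · intro A hA
    rw [hF] at hA
    obtain ⟨hsub, hj⟩ := hA
    rw [hg]
    by_cases hone : 1 ∈ A
    · have hA1 : A ⊆ {1} := by
        intro a ha
        have := hsub ha
        rw [hX, Finset.mem_Icc] at this
        rcases Nat.lt_or_ge a 2 with h | h
        · simp; omega
        · exact absurd ⟨hone, ha⟩ (hj a h this.2)
      have hc : A.card ≤ 1 := by
        calc A.card ≤ ({1} : Finset ℕ).card := Finset.card_le_card hA1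
        _ = 1 := by simp
      split <;> push_cast <;> [skip; skip] <;>
        (have : (A.card : ℝ) ≤ 1 := by exact_mod_cast hc) <;>
        nlinarith [Nat.cast_nonneg (α := ℝ) P]
    · have hA2 : A ⊆ Finset.Icc 2 (P + 2) := by
        intro a ha
        have := hsub ha
        rw [hX, Finset.mem_Icc] at this
        rw [Finset.mem_Icc]
        constructor
        · rcases Nat.lt_or_ge a 2 with h | h
          · interval_cases a
            · omega
            · exact absurd ha hone
          · exact h
        · exact this.2
      have hc : A.card ≤ P + 1 := by
        have := Finset.card_le_card hA2
        rw [Nat.card_Icc] at this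
        omega
      have : (A.card : ℝ) ≤ (P : ℝ) + 1 := by exact_mod_cast hc
      split <;> linarith
  · rw [hF]
    constructor
    · intro a ha
      simp at ha
      rw [hX, Finset.mem_Icc]
      omega
    · intro j hj2 _ ⟨_, hjA⟩
      simp at hjA
      omega
  · intro B hB hsub
    rw [hF] at hB
    obtain ⟨hBX, hj⟩ := hB
    have hone : 1 ∈ B := hsub (by simp)
    apply Finset.Subset.antisymm _ hsub
    intro b hb
    have := hBX hb
    rw [hX, Finset.mem_Icc] at this
    rcases Nat.lt_or_ge b 2 with h | h
    · simp; omega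
    · exact absurd ⟨hone, hb⟩ (hj b h this.2)
  · rw [hg1]
    have : g ∅ = 0 := by rw [hg]; simp
    rw [this]
    have hP1 : (P : ℝ) + 1 ≠ 0 := by positivity
    field_simp
    ring
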